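/- arXiv:1308.4466 — 3 statements merged into one kernel-verified Lean document; each statement's English description precedes it below -/
import Mathlib

section
/- Let n ≥ 1, let (a_1 : b_1),…,(a_n : b_n) be pairwise distinct points of P¹(ℂ), and let (a : b) ∈ P¹(ℂ) be distinct from all of them. Then the polynomial F(x,y,z) = z·(b x − a y)^{n−1} − ∏_{i=1}^n (b_i x − a_i y) is homogeneous of degree n, satisfies F(a_i, b_i, 0) = 0 for every i = 1,…,n, and is irreducible in the polynomial ring ℂ[x,y,z]. -/
open MvPolynomial

/-- A degree-one polynomial `X * C g - C h` over a domain is irreducible provided `g ≠ 0`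
and every common divisor of `g` and `h` is a unit. -/
private lemma aux_irred_linear {R : Type*} [CommRing R] [IsDomain R] {g h : R}
    (hg : g ≠ 0) (hcop : ∀ r : R, r ∣ g → r ∣ h → IsUnit r) :
    Irreducible (Polynomial.X * Polynomial.C g - Polynomial.C h) := by
  set p : Polynomial R := Polynomial.X * Polynomial.C g - Polynomial.C h with hp
  have hc1 : p.coeff 1 = g := by simp [hp]
  have hc0 : p.coeff 0 = -h := by simp [hp]
  have hdeg : p.degree = 1 := by
    rw [hp, sub_eq_add_neg, ← Polynomial.C_neg, mul_comm]
    rw [Polynomial.degree_add_eq_left_of_degree_lt, Polynomial.degree_C_mul_X hg]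
    rw [Polynomial.degree_C_mul_X hg]
    exact lt_of_le_of_lt Polynomial.degree_C_le (by norm_num)
  have hnd : p.natDegree = 1 := Polynomial.natDegree_eq_of_degree_eq_some hdeg
  have hpne : p ≠ 0 := fun h0 => by simp [h0] at hdeg
  constructor
  · intro hu
    rw [Polynomial.degree_eq_zero_of_isUnit hu] at hdeg
    exact (by norm_num : (0 : WithBot ℕ) ≠ 1) hdeg
  · intro f q hfq
    have hf0 : f ≠ 0 := fun h0 => hpne (by rw [hfq, h0, zero_mul])
    have hq0 : q ≠ 0 := fun h0 => hpne (by rw [hfq, h0, mul_zero])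
    have hsum : f.natDegree + q.natDegree = 1 := by
      rw [← Polynomial.natDegree_mul hf0 hq0, ← hfq, hnd]
    rcases Nat.eq_zero_or_pos f.natDegree with hfz | hfpos
    · left
      obtain ⟨r, hr⟩ := Polynomial.natDegree_eq_zero.mp hfz
      have hrg : r ∣ g := by
        refine ⟨q.coeff 1, ?_⟩
        rw [← hc1, hfq, ← hr, Polynomial.coeff_C_mul]
      have hrh : r ∣ h := by
        have : r ∣ -h := by
          refine ⟨q.coeff 0, ?_⟩
          rw [← hc0, hfq, ← hr, Polynomial.coeff_C_mul]
        exact (dvd_neg.mp this)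
      rw [← hr]
      exact Polynomial.isUnit_C.mpr (hcop r hrg hrh)
    · right
      have hqz : q.natDegree = 0 := by omega
      obtain ⟨r, hr⟩ := Polynomial.natDegree_eq_zero.mp hqz
      have hrg : r ∣ g := by
        refine ⟨f.coeff 1, ?_⟩
        rw [← hc1, hfq, ← hr, mul_comm, Polynomial.coeff_C_mul]
      have hrh : r ∣ h := by
        have : r ∣ -h := by
          refine ⟨f.coeff 0, ?_⟩
          rw [← hc0, hfq, ← hr, mul_comm, Polynomial.coeff_C_mul]
        exact (dvd_neg.mp this)
      rw [← hr]
      exact Polynomial.isUnit_C.mpr (hcop r hrg hrh)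

/-- No irreducible element of `ℂ[x,y]` divides both `X 0` and `X 1`. -/
private lemma aux_no_common {q : MvPolynomial (Fin 2) ℂ} (hq : Irreducible q)
    (h0 : q ∣ X 0) (h1 : q ∣ X 1) : False := by
  set E := MvPolynomial.finSuccEquiv ℂ 1 with hE
  have hd0 : E q ∣ Polynomial.X := by
    have := map_dvd E.toAlgHom h0
    simpa [hE, MvPolynomial.finSuccEquiv_X_zero] using this
  have hd1 : E q ∣ Polynomial.C (X 0) := by
    have := map_dvd E.toAlgHom h1
    have h2 : E (X 1) = Polynomial.C (X 0) := by
      have : ((1 : Fin 2)) = Fin.succ 0 := rfl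
      rw [this, hE]
      exact MvPolynomial.finSuccEquiv_X_succ
    simpa [h2] using this
  have hC0 : (Polynomial.C (X 0) : Polynomial (MvPolynomial (Fin 1) ℂ)) ≠ 0 := by
    simp [Polynomial.C_eq_zero, MvPolynomial.X_ne_zero]
  have hdeg : (E q).degree ≤ 0 :=
    le_trans (Polynomial.degree_le_of_dvd hd1 hC0) Polynomial.degree_C_le
  have hqC : E q = Polynomial.C ((E q).coeff 0) := Polynomial.eq_C_of_degree_le_zero hdeg
  have hr : (E q).coeff 0 ∣ (Polynomial.X : Polynomial (MvPolynomial (Fin 1) ℂ)).coeff 1 := by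
    rw [hqC] at hd0
    exact (Polynomial.C_dvd_iff_dvd_coeff _ _).mp hd0 1
  rw [Polynomial.coeff_X_one] at hr
  have hu : IsUnit (E q) := by
    rw [hqC]
    exact Polynomial.isUnit_C.mpr (isUnit_of_dvd_one hr)
  have : IsUnit q := by
    have := hu.map E.symm.toAlgHom
    simpa using this
  exact hq.not_isUnit this

theorem stmt2 (n : ℕ) (hn : 1 ≤ n) (a b : Fin n → ℂ) (c d : ℂ)
    (hnz : ∀ i, ¬(a i = 0 ∧ b i = 0))
    (hcd : ¬(c = 0 ∧ d = 0))
    (hdist : ∀ i j, i ≠ j → a i * b j - a j * b i ≠ 0)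
    (hsep : ∀ i, c * b i - a i * d ≠ 0)
    (F : MvPolynomial (Fin 3) ℂ)
    (hF : F = X 2 * (C d * X 0 - C c * X 1) ^ (n - 1) -
      ∏ i, (C (b i) * X 0 - C (a i) * X 1)) :
    F.IsHomogeneous n ∧
    (∀ i, MvPolynomial.eval (![a i, b i, 0] : Fin 3 → ℂ) F = 0) ∧
    Irreducible F := by
  refine ⟨?_, ?_, ?_⟩
  · -- homogeneity
    subst hF
    apply MvPolynomial.IsHomogeneous.sub
    · have hl : ((C d * X 0 - C c * X 1 : MvPolynomial (Fin 3) ℂ)).IsHomogeneous 1 :=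
        (isHomogeneous_C_mul_X d 0).sub (isHomogeneous_C_mul_X c 1)
      have := (isHomogeneous_X ℂ (2 : Fin 3)).mul (hl.pow (n - 1))
      have heq : 1 + 1 * (n - 1) = n := by omega
      rwa [heq] at this
    · have := MvPolynomial.IsHomogeneous.prod Finset.univ
        (fun i => (C (b i) * X 0 - C (a i) * X 1 : MvPolynomial (Fin 3) ℂ)) (fun _ => 1)
        (fun i _ => (isHomogeneous_C_mul_X (b i) 0).sub (isHomogeneous_C_mul_X (a i) 1))
      simpa using this
  · -- evaluation
    intro i
    subst hF
    rw [map_sub, map_mul]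
    have h2 : MvPolynomial.eval (![a i, b i, 0] : Fin 3 → ℂ) (X 2) = 0 := by simp
    rw [h2, zero_mul, zero_sub, neg_eq_zero, map_prod]
    apply Finset.prod_eq_zero (Finset.mem_univ i)
    simp [mul_comm]
  · -- irreducibility
    set ℓ : MvPolynomial (Fin 2) ℂ := C d * X 0 - C c * X 1 with hℓ
    set L : Fin n → MvPolynomial (Fin 2) ℂ := fun i => C (b i) * X 0 - C (a i) * X 1 with hL
    have hℓne : ℓ ≠ 0 := by
      intro h0
      apply hcd
      constructor
      · have := congrArg (MvPolynomial.eval ![(0 : ℂ), 1]) h0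
        simpa [hℓ] using this
      · have := congrArg (MvPolynomial.eval ![(1 : ℂ), 0]) h0
        simpa [hℓ] using this
    have hLne : ∀ i, L i ≠ 0 := by
      intro i h0
      apply hnz i
      constructor
      · have := congrArg (MvPolynomial.eval ![(0 : ℂ), 1]) h0
        simpa [hL] using this
      · have := congrArg (MvPolynomial.eval ![(1 : ℂ), 0]) h0
        simpa [hL] using this
    set G : MvPolynomial (Fin 2) ℂ := ℓ ^ (n - 1) with hG
    set H : MvPolynomial (Fin 2) ℂ := ∏ i, L i with hH
    have hGne : G ≠ 0 := pow_ne_zero _ hℓne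
    -- every common divisor of G and H is a unit
    have hcop : ∀ r : MvPolynomial (Fin 2) ℂ, r ∣ G → r ∣ H → IsUnit r := by
      intro r hrG hrH
      by_contra hnu
      have hr0 : r ≠ 0 := fun h0 => hGne (zero_dvd_iff.mp (h0 ▸ hrG))
      obtain ⟨q, hqirr, hqr⟩ := WfDvdMonoid.exists_irreducible_factor hnu hr0
      have hqp : Prime q := UniqueFactorizationMonoid.irreducible_iff_prime.mp hqirr
      have hqℓ : q ∣ ℓ := hqp.dvd_of_dvd_pow (hqr.trans hrG)
      obtain ⟨i, _, hqi⟩ := hqp.exists_mem_finset_dvd (hqr.trans hrH)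
      set k : ℂ := a i * d - c * b i with hk
      have hkne : k ≠ 0 := by
        intro h0
        apply hsep i
        rw [hk] at h0
        linear_combination -h0
      have hkuX0 : (C k * X 0 : MvPolynomial (Fin 2) ℂ) =
          C (a i) * ℓ - C c * L i := by
        rw [hℓ, hL, hk]
        push_cast [map_sub, map_mul]
        ring
      have hkuX1 : (C k * X 1 : MvPolynomial (Fin 2) ℂ) =
          C (b i) * ℓ - C d * L i := by
        rw [hℓ, hL, hk]
        push_cast [map_sub, map_mul]
        ring
      have hCku : IsUnit (C k : MvPolynomial (Fin 2) ℂ) :=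
        IsUnit.of_mul_eq_one (C k⁻¹) (by rw [← map_mul, mul_inv_cancel₀ hkne, map_one])
      have hqX0 : q ∣ X 0 := by
        have h1 : q ∣ C k * X 0 := by
          rw [hkuX0]
          exact dvd_sub (hqℓ.mul_left _) (hqi.mul_left _)
        exact hCku.dvd_mul_left.mp h1
      have hqX1 : q ∣ X 1 := by
        have h1 : q ∣ C k * X 1 := by
          rw [hkuX1]
          exact dvd_sub (hqℓ.mul_left _) (hqi.mul_left _)
        exact hCku.dvd_mul_left.mp h1
      exact aux_no_common hqirr hqX0 hqX1
    -- transport the problem to (ℂ[x,y])[z]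
    set Φ : MvPolynomial (Fin 3) ℂ ≃ₐ[ℂ] Polynomial (MvPolynomial (Fin 2) ℂ) :=
      (renameEquiv ℂ (finRotate 3)).trans (MvPolynomial.finSuccEquiv ℂ 2) with hΦ
    have hΦF : Φ F = Polynomial.X * Polynomial.C G - Polynomial.C H := by
      rw [hF, hΦ, hG, hH, hℓ, hL]
      have e2 : finRotate 3 (2 : Fin 3) = 0 := by decide
      have e0 : finRotate 3 (0 : Fin 3) = 1 := by decide
      have e1 : finRotate 3 (1 : Fin 3) = 2 := by decide
      have fs1 : (MvPolynomial.finSuccEquiv ℂ 2) (X 1) = Polynomial.C (X 0) := by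
        have h : (1 : Fin 3) = Fin.succ 0 := rfl
        rw [h]; exact MvPolynomial.finSuccEquiv_X_succ
      have fs2 : (MvPolynomial.finSuccEquiv ℂ 2) (X 2) = Polynomial.C (X 1) := by
        have h : (2 : Fin 3) = Fin.succ 1 := rfl
        rw [h]; exact MvPolynomial.finSuccEquiv_X_succ
      have fsC : ∀ x : ℂ, (MvPolynomial.finSuccEquiv ℂ 2) (C x) = Polynomial.C (C x) := by
        intro x
        simp [MvPolynomial.finSuccEquiv_apply]
      simp only [AlgEquiv.trans_apply, map_sub, map_mul, map_pow, map_prod,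
        renameEquiv_apply, rename_X, rename_C, e0, e1, e2,
        MvPolynomial.finSuccEquiv_X_zero, fs1, fs2, fsC]
    have : Irreducible (Φ F) := by
      rw [hΦF]
      exact aux_irred_linear hGne hcop
    exact (MulEquiv.irreducible_iff Φ).mp this
end

section
/- Let D = Σ_{i=1}^n (a_i : b_i : 0) be an n-degree Hausdorff divisor (n distinct points of P²(ℂ) on the line z = 0), and let H_0,…,H_k be a ℂ-basis of the space V(n,D) of homogeneous polynomials of degree n in ℂ[x,y,z] vanishing at all the points of D. Then the defining polynomial H = Σ_{j=0}^{k} λ_j H_j of the linear system H(n,D) is irreducible as an element of the polynomial ring ℂ[λ_0,…,λ_k, x, y, z]; in particular H has no nonconstant factor lying in ℂ[x,y,z] and no nonconstant factor lying in ℂ[λ_0,…,λ_k]. -/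
open MvPolynomial

noncomputable section Stmt3Aux

/-- units of `MvPolynomial (Fin m) ℂ` are constants -/
theorem myIsUnit_fin : ∀ (m : ℕ) (u : MvPolynomial (Fin m) ℂ), IsUnit u → ∃ c : ℂ, u = C c := by
  intro m
  induction m with
  | zero =>
    intro u _
    exact ⟨constantCoeff u, u.eq_C_of_isEmpty⟩
  | succ m ih =>
    intro u hu
    have h2 : IsUnit (finSuccEquiv ℂ m u) := hu.map _
    rw [Polynomial.isUnit_iff] at h2
    obtain ⟨r, hr, hCr⟩ := h2
    obtain ⟨c, rfl⟩ := ih r hr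
    refine ⟨c, (finSuccEquiv ℂ m).injective ?_⟩
    rw [← hCr]
    simp [finSuccEquiv_apply]

theorem myIsUnit {σ : Type*} [Fintype σ] (u : MvPolynomial σ ℂ) (hu : IsUnit u) :
    ∃ c : ℂ, u = C c := by
  obtain ⟨c, hc⟩ := myIsUnit_fin _ (renameEquiv ℂ (Fintype.equivFin σ) u) (hu.map _)
  refine ⟨c, ?_⟩
  have := congrArg (renameEquiv ℂ (Fintype.equivFin σ)).symm hc
  simpa [renameEquiv_symm, rename_C] using this

theorem myPrimeX2 : Prime (X (2 : Fin 3) : MvPolynomial (Fin 3) ℂ) := by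
  let e := (renameEquiv ℂ (Equiv.swap (0 : Fin 3) 2)).trans (finSuccEquiv ℂ 2)
  rw [← MulEquiv.prime_iff e]
  have : e (X 2) = Polynomial.X := by
    simp [e, renameEquiv_apply, rename_X, Equiv.swap_apply_right, finSuccEquiv_X_zero]
  show Prime (e (X 2))
  rw [this]
  exact Polynomial.prime_X

end Stmt3Aux

noncomputable section Stmt3Aux

abbrev AA (k : ℕ) := MvPolynomial (Fin (k + 1) ⊕ Fin 3) ℂ

def ψA (k : ℕ) : AA k →ₐ[ℂ] Polynomial (AA k) :=
  aeval (Sum.elim (fun j => Polynomial.X * Polynomial.C (X (Sum.inl j)))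
    (fun i => Polynomial.C (X (Sum.inr i))))

def πA (k : ℕ) (j : Fin (k + 1)) : AA k →ₐ[ℂ] MvPolynomial (Fin 3) ℂ :=
  aeval (Sum.elim (fun j' => if j' = j then 1 else 0) X)

def κA (k : ℕ) : AA k →ₐ[ℂ] MvPolynomial (Fin 3) ℂ := aeval (Sum.elim 0 X)

def κ'A (k : ℕ) : AA k →ₐ[ℂ] MvPolynomial (Fin (k + 1)) ℂ := aeval (Sum.elim X 0)

def σA (k : ℕ) : AA k →ₐ[ℂ] AA k := aeval (Sum.elim (fun j => X (Sum.inl j)) 0)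

def ε1A (k : ℕ) : Polynomial (AA k) →ₐ[ℂ] AA k :=
  (Polynomial.aeval (1 : AA k)).restrictScalars ℂ

def ε0A (k : ℕ) : Polynomial (AA k) →ₐ[ℂ] AA k :=
  (Polynomial.aeval (0 : AA k)).restrictScalars ℂ

lemma πA_rename (k : ℕ) (j : Fin (k + 1)) (p : MvPolynomial (Fin 3) ℂ) :
    πA k j (rename Sum.inr p) = p := by
  rw [πA, aeval_rename]
  simp [Sum.elim_comp_inr]

lemma κA_rename (k : ℕ) (p : MvPolynomial (Fin 3) ℂ) :
    κA k (rename Sum.inr p) = p := by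
  rw [κA, aeval_rename]
  simp [Sum.elim_comp_inr]

lemma κ'A_rename (k : ℕ) (p : MvPolynomial (Fin (k + 1)) ℂ) :
    κ'A k (rename Sum.inl p) = p := by
  rw [κ'A, aeval_rename]
  simp [Sum.elim_comp_inl]

lemma σA_rename_inl (k : ℕ) (p : MvPolynomial (Fin (k + 1)) ℂ) :
    σA k (rename Sum.inl p) = rename Sum.inl p := by
  rw [σA, aeval_rename]
  simp only [Sum.elim_comp_inl]
  exact (DFunLike.congr_fun (rename_eq_aeval Sum.inl) p).symm

lemma ψA_rename (k : ℕ) (p : MvPolynomial (Fin 3) ℂ) :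
    ψA k (rename Sum.inr p) = Polynomial.C (rename Sum.inr p) := by
  have h : (ψA k).comp ((rename Sum.inr : MvPolynomial (Fin 3) ℂ →ₐ[ℂ] AA k)) =
      (IsScalarTower.toAlgHom ℂ (AA k) (Polynomial (AA k))).comp
        (rename Sum.inr : MvPolynomial (Fin 3) ℂ →ₐ[ℂ] AA k) := by
    apply algHom_ext
    intro i
    simp [ψA, Polynomial.algebraMap_eq]
  have := DFunLike.congr_fun h p
  simpa [Polynomial.algebraMap_eq] using this

lemma ε1A_ψA (k : ℕ) (x : AA k) : ε1A k (ψA k x) = x := by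
  have h : (ε1A k).comp (ψA k) = AlgHom.id ℂ (AA k) := by
    apply algHom_ext
    rintro (j | i) <;> simp [ε1A, ψA]
  exact DFunLike.congr_fun h x

lemma ε0A_ψA (k : ℕ) (x : AA k) :
    ε0A k (ψA k x) = (rename Sum.inr).comp (κA k) x := by
  have h : (ε0A k).comp (ψA k) =
      ((rename (Sum.inr : Fin 3 → Fin (k+1) ⊕ Fin 3)) :
        MvPolynomial (Fin 3) ℂ →ₐ[ℂ] AA k).comp (κA k) := by
    apply algHom_ext
    rintro (j | i) <;> simp [ε0A, ψA, κA]
  exact DFunLike.congr_fun h x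

end Stmt3Aux

theorem stmt3 (n k : ℕ) (hn : 0 < n) (a b : Fin n → ℂ)
    (hnz : ∀ i, ¬(a i = 0 ∧ b i = 0))
    (hdist : ∀ i j, i ≠ j → a i * b j - a j * b i ≠ 0)
    (V : Submodule ℂ (MvPolynomial (Fin 3) ℂ))
    (hV : V = homogeneousSubmodule (Fin 3) ℂ n ⊓
      ⨅ i, LinearMap.ker
        (MvPolynomial.aeval (![a i, b i, 0] : Fin 3 → ℂ)).toLinearMap)
    (B : Module.Basis (Fin (k + 1)) ℂ ↥V)
    (H : MvPolynomial (Fin (k + 1) ⊕ Fin 3) ℂ)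
    (hH : H = ∑ j, X (Sum.inl j) *
      rename Sum.inr ((B j : MvPolynomial (Fin 3) ℂ))) :
    Irreducible H ∧
    (∀ G : MvPolynomial (Fin 3) ℂ, rename Sum.inr G ∣ H → ∃ c : ℂ, G = C c) ∧
    (∀ G : MvPolynomial (Fin (k + 1)) ℂ, rename Sum.inl G ∣ H → ∃ c : ℂ, G = C c) := by
  classical
  -- basic facts about the basis elements
  have hle1 : V ≤ homogeneousSubmodule (Fin 3) ℂ n := le_of_eq_of_le hV inf_le_left
  have hle2 : V ≤ ⨅ i, LinearMap.ker
      (MvPolynomial.aeval (![a i, b i, 0] : Fin 3 → ℂ)).toLinearMap :=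
    le_of_eq_of_le hV inf_le_right
  have hBhom : ∀ j, ((B j : MvPolynomial (Fin 3) ℂ)).IsHomogeneous n := fun j =>
    (mem_homogeneousSubmodule _ _).mp (hle1 (B j).2)
  have hBne : ∀ j, (B j : MvPolynomial (Fin 3) ℂ) ≠ 0 := by
    intro j hj
    exact B.ne_zero j (by exact_mod_cast Subtype.ext hj)
  -- the images of H under the projections
  have hπH : ∀ j, πA k j H = (B j : MvPolynomial (Fin 3) ℂ) := by
    intro j
    rw [hH, map_sum]
    have hterm : ∀ j' : Fin (k + 1),
        πA k j (X (Sum.inl j') * rename Sum.inr ((B j' : MvPolynomial (Fin 3) ℂ)))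
        = if j' = j then ((B j' : MvPolynomial (Fin 3) ℂ)) else 0 := by
      intro j'
      rw [map_mul, πA_rename]
      simp only [πA, aeval_X, Sum.elim_inl, ite_mul, one_mul, zero_mul]
    simp [hterm]
  have hH0 : H ≠ 0 := by
    intro h0
    exact hBne 0 (by rw [← hπH 0, h0, map_zero])
  -- ψ sends H to X * C H
  have hψH : ψA k H = Polynomial.X * Polynomial.C H := by
    have : ψA k H = ∑ j, Polynomial.X *
        Polynomial.C (X (Sum.inl j) * rename Sum.inr ((B j : MvPolynomial (Fin 3) ℂ))) := by
      rw [hH, map_sum]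
      refine Finset.sum_congr rfl fun j _ => ?_
      rw [map_mul, ψA_rename,
        show ψA k (X (Sum.inl j)) = Polynomial.X * Polynomial.C (X (Sum.inl j)) from by
          simp [ψA],
        mul_assoc, ← Polynomial.C_mul]
    rw [this, ← Finset.mul_sum, ← map_sum, ← hH]
  -- membership of z^n and P in V
  have hzV : (X 2 ^ n : MvPolynomial (Fin 3) ℂ) ∈ V := by
    rw [hV, Submodule.mem_inf]
    refine ⟨(mem_homogeneousSubmodule _ _).mpr (isHomogeneous_X_pow _ _), ?_⟩
    rw [Submodule.mem_iInf]
    intro i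
    rw [LinearMap.mem_ker]
    show aeval ![a i, b i, 0] (X 2 ^ n) = 0
    rw [map_pow, aeval_X]
    simp [zero_pow hn.ne']
  set P : MvPolynomial (Fin 3) ℂ :=
    ∏ i, (C (b i) * X 0 - C (a i) * X 1) with hPdef
  have hPV : P ∈ V := by
    rw [hV, Submodule.mem_inf]
    constructor
    · rw [mem_homogeneousSubmodule]
      have := MvPolynomial.IsHomogeneous.prod Finset.univ
        (fun i => (C (b i) * X 0 - C (a i) * X (1:Fin 3) : MvPolynomial (Fin 3) ℂ))
        (fun _ => 1)
        (fun i _ => ((isHomogeneous_C_mul_X (b i) 0).sub (isHomogeneous_C_mul_X (a i) 1)))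
      simpa using this
    · rw [Submodule.mem_iInf]
      intro i
      rw [LinearMap.mem_ker]
      show aeval ![a i, b i, 0] P = 0
      rw [hPdef, map_prod]
      refine Finset.prod_eq_zero (Finset.mem_univ i) ?_
      simp [mul_comm]
  have hPne : P ≠ 0 := by
    rw [hPdef]
    refine Finset.prod_ne_zero_iff.mpr fun i _ h => ?_
    have h1 := congrArg (aeval (![1,0,0] : Fin 3 → ℂ)) h
    have h2 := congrArg (aeval (![0,1,0] : Fin 3 → ℂ)) h
    simp at h1 h2
    exact hnz i ⟨h2, h1⟩
  -- the core lemma: a factor free of the λ variables is constant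
  have core : ∀ G : MvPolynomial (Fin 3) ℂ, rename Sum.inr G ∣ H → ∃ c : ℂ, G = C c := by
    intro G hGdvd
    obtain ⟨W, hW⟩ := hGdvd
    have hdvdB : ∀ j, G ∣ (B j : MvPolynomial (Fin 3) ℂ) := by
      intro j
      refine ⟨πA k j W, ?_⟩
      have := congrArg (πA k j) hW
      rwa [hπH, map_mul, πA_rename] at this
    have hdvdV : ∀ v : MvPolynomial (Fin 3) ℂ, v ∈ V → G ∣ v := by
      intro v hv
      have hrepr := B.sum_repr ⟨v, hv⟩
      have h2 := congrArg (V.subtype) hrepr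
      rw [map_sum] at h2
      simp only [Submodule.coe_subtype, map_smul] at h2
      rw [← h2]
      refine Finset.dvd_sum fun j _ => ?_
      rw [smul_eq_C_mul]
      exact Dvd.dvd.mul_left (hdvdB j) _
    by_cases hu : IsUnit G
    · exact myIsUnit G hu
    exfalso
    have hG0 : G ≠ 0 := by
      rintro rfl
      exact hBne 0 (zero_dvd_iff.mp (hdvdB 0))
    obtain ⟨p, hpirr, hpG⟩ := WfDvdMonoid.exists_irreducible_factor hu hG0
    have hpprime : Prime p := UniqueFactorizationMonoid.irreducible_iff_prime.mp hpirr
    have hpz : p ∣ X 2 := hpprime.dvd_of_dvd_pow (hpG.trans (hdvdV _ hzV))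
    have hassoc : Associated p (X 2) :=
      hpirr.associated_of_dvd myPrimeX2.irreducible hpz
    have hX2P : (X 2 : MvPolynomial (Fin 3) ℂ) ∣ P :=
      (hassoc.dvd_iff_dvd_left).mp (hpG.trans (hdvdV _ hPV))
    obtain ⟨W2, hW2⟩ := hX2P
    set φz : MvPolynomial (Fin 3) ℂ →ₐ[ℂ] MvPolynomial (Fin 3) ℂ :=
      aeval (fun m : Fin 3 => if m = 2 then 0 else X m) with hφzdef
    have hφzP : φz P = P := by
      rw [hPdef, map_prod]
      refine Finset.prod_congr rfl fun i _ => ?_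
      rw [map_sub, map_mul, map_mul]
      simp [hφzdef, algebraMap_eq, if_neg (by decide : ¬(0:Fin 3) = 2),
        if_neg (by decide : ¬(1:Fin 3) = 2)]
    have := congrArg φz hW2
    rw [hφzP, map_mul] at this
    simp only [hφzdef, aeval_X, if_pos rfl, eq_self_iff_true, if_true, zero_mul] at this
    exact hPne this
  have hIrr : Irreducible H := by
    constructor
    · intro hu
      obtain ⟨c, hc⟩ := myIsUnit H hu
      have hB0 : (B 0 : MvPolynomial (Fin 3) ℂ) = C c := by
        rw [← hπH 0, hc]
        simp [algHom_C, algebraMap_eq]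
      have hc0 : c = 0 := by
        have h := (hBhom 0).coeff_eq_zero (d := 0) (by simpa using hn.ne)
        rw [hB0] at h
        simpa using h
      exact hBne 0 (by rw [hB0, hc0, map_zero])
    · intro p q hpq
      have hp0 : p ≠ 0 := by rintro rfl; rw [zero_mul] at hpq; exact hH0 hpq
      have hq0 : q ≠ 0 := by rintro rfl; rw [mul_zero] at hpq; exact hH0 hpq
      have hψinj : Function.Injective (ψA k) := fun x y hxy => by
        have h := congrArg (ε1A k) hxy
        rwa [ε1A_ψA, ε1A_ψA] at h
      have key : ∀ u v : MvPolynomial (Fin (k + 1) ⊕ Fin 3) ℂ, H = u * v →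
          (ψA k v).natDegree = 0 → IsUnit v := by
        intro u v huv hdeg0
        have hv0 : v ≠ 0 := by rintro rfl; rw [mul_zero] at huv; exact hH0 huv
        obtain ⟨w, hw⟩ := Polynomial.natDegree_eq_zero.mp hdeg0
        have hv1 : ε1A k (Polynomial.C w) = v := by rw [hw, ε1A_ψA]
        have hv1' : w = v := by simpa [ε1A] using hv1
        have hv2 : v = rename Sum.inr (κA k v) := by
          have h0 := ε0A_ψA k v
          rw [← hw] at h0
          simp only [ε0A, AlgHom.coe_restrictScalars', Polynomial.aeval_C] at h0
          simpa [hv1'] using h0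
        have hdvd : rename Sum.inr (κA k v) ∣ H := by
          rw [← hv2, huv]
          exact Dvd.intro_left u rfl
        obtain ⟨c, hc⟩ := core (κA k v) hdvd
        have hcne : c ≠ 0 := by
          rintro rfl
          rw [map_zero] at hc
          exact hv0 (by rw [hv2, hc, map_zero])
        rw [hv2, hc, rename_C]
        exact (isUnit_iff_ne_zero.mpr hcne).map
          (C : ℂ →+* MvPolynomial (Fin (k + 1) ⊕ Fin 3) ℂ)
      have hdeg : (ψA k p).natDegree + (ψA k q).natDegree = 1 := by
        have hmul : ψA k p * ψA k q = Polynomial.X * Polynomial.C H := by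
          rw [← map_mul, ← hpq, hψH]
        have h1 : (ψA k p) ≠ 0 := fun h => hp0 (hψinj (by rw [h, map_zero]))
        have h2 : (ψA k q) ≠ 0 := fun h => hq0 (hψinj (by rw [h, map_zero]))
        rw [← Polynomial.natDegree_mul h1 h2, hmul, mul_comm,
          Polynomial.natDegree_C_mul_X _ hH0]
      rcases Nat.eq_zero_or_pos (ψA k q).natDegree with h | h
      · exact Or.inr (key p q hpq h)
      · have hp : (ψA k p).natDegree = 0 := by omega
        exact Or.inl (key q p (by rw [hpq, mul_comm]) hp)
  refine ⟨hIrr, core, ?_⟩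
  intro G hGdvd
  obtain ⟨W, hW⟩ := hGdvd
  rcases hIrr.isUnit_or_isUnit hW with h | h
  · have hG : IsUnit G := by
      have h2 := h.map (κ'A k)
      rwa [κ'A_rename] at h2
    exact myIsUnit G hG
  · obtain ⟨c, hc⟩ := myIsUnit W h
    exfalso
    apply hH0
    have hσH : σA k H = 0 := by
      rw [hH, map_sum]
      refine Finset.sum_eq_zero fun j _ => ?_
      rw [map_mul]
      have h1 : σA k (rename Sum.inr ((B j : MvPolynomial (Fin 3) ℂ))) = 0 := by
        rw [σA, aeval_rename, Sum.elim_comp_inr, aeval_zero]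
        have hcc : constantCoeff ((B j : MvPolynomial (Fin 3) ℂ)) = 0 := by
          have h2 := (hBhom j).coeff_eq_zero (d := 0) (by simpa using hn.ne)
          simpa [constantCoeff_eq] using h2
        rw [hcc, map_zero]
      rw [h1, mul_zero]
    have h3 := congrArg (σA k) hW
    rw [hσH, map_mul, σA_rename_inl, hc] at h3
    rw [hW, hc]
    rw [algHom_C, algebraMap_eq] at h3
    rw [← h3]
end

section
/- Let K be a field, let n ≥ 2, and let f ∈ K[x,y] be a polynomial of total degree n of the form f = f_{n−1} + f_n, where f_d denotes the homogeneous component of f of degree d and f_n ≠ 0 (i.e. the affine curve f = 0 has a point of multiplicity at least n−1 at the origin). Set g(t) = f_{n−1}(t, 1) and h(t) = f_n(t, 1) in K[t], and assume h ≠ 0. Then in the rational function field K(t) one has f(−t·g(t)/h(t), −g(t)/h(t)) = 0; that is, x(t) = −t·g(t)/h(t), y(t) = −g(t)/h(t) is a rational parametrization of the curve by lines through the origin. Moreover, if K is algebraically closed and f is irreducible in K[x,y], then f_{n−1} ≠ 0 and the rational function g(t)/h(t) is not constant, so the parametrization is nonconstant. -/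
open MvPolynomial

namespace Stmt12Aux

variable {K : Type*} [Field K]

lemma degree_two (m : Fin 2 →₀ ℕ) : Finsupp.degree m = m 0 + m 1 := by
  have : ∑ i ∈ m.support, m i = ∑ i : Fin 2, m i :=
    Finset.sum_subset (Finset.subset_univ _) fun i _ hi =>
      Finsupp.notMem_support_iff.mp hi
  rw [Finsupp.degree_apply, this, Fin.sum_univ_two]

lemma coeff_deg {F : MvPolynomial (Fin 2) K} {d : ℕ} (hF : F.IsHomogeneous d)
    {m : Fin 2 →₀ ℕ} (hm : coeff m F ≠ 0) : m 0 + m 1 = d := by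
  rw [← degree_two]
  by_contra hne
  exact hm (hF.coeff_eq_zero hne)

lemma aeval_scale {A : Type*} [CommRing A] [Algebra K A] {F : MvPolynomial (Fin 2) K} {d : ℕ}
    (hF : F.IsHomogeneous d) (c : A) (w : Fin 2 → A) :
    aeval (fun i => c * w i) F = c ^ d * aeval w F := by
  rw [aeval_def, aeval_def, eval₂_eq', eval₂_eq', Finset.mul_sum]
  refine Finset.sum_congr rfl fun m hm => ?_
  have hdm := coeff_deg hF (mem_support_iff.mp hm)
  calc algebraMap K A (coeff m F) * ∏ i, (c * w i) ^ m i
      = algebraMap K A (coeff m F) * ((c ^ m 0 * c ^ m 1) * ∏ i, w i ^ m i) := by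
        rw [Fin.prod_univ_two, Fin.prod_univ_two]; ring
    _ = c ^ d * (algebraMap K A (coeff m F) * ∏ i, w i ^ m i) := by
        rw [← pow_add, hdm]; ring

noncomputable def mm (i j : ℕ) : Fin 2 →₀ ℕ := Finsupp.single 0 i + Finsupp.single 1 j

@[simp] lemma mm_zero (i j : ℕ) : mm i j 0 = i := by
  simp [mm, Finsupp.single_apply, show (1 : Fin 2) ≠ 0 by decide]

@[simp] lemma mm_one (i j : ℕ) : mm i j 1 = j := by
  simp [mm, Finsupp.single_apply, show (0 : Fin 2) ≠ 1 by decide]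

lemma mm_self (m : Fin 2 →₀ ℕ) : mm (m 0) (m 1) = m := by
  ext i
  match i with
  | 0 => simp
  | 1 => simp

noncomputable def homg (d : ℕ) : Polynomial K →ₗ[K] MvPolynomial (Fin 2) K :=
  ∑ i ∈ Finset.range (d + 1), (monomial (mm i (d - i))).comp (Polynomial.lcoeff K i)

lemma homg_apply (d : ℕ) (p : Polynomial K) :
    homg d p = ∑ i ∈ Finset.range (d + 1), monomial (mm i (d - i)) (p.coeff i) := by
  simp [homg, Polynomial.lcoeff_apply]

lemma homg_isHom (d : ℕ) (p : Polynomial K) : (homg d p).IsHomogeneous d := by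
  rw [homg_apply]
  apply IsHomogeneous.sum
  intro i hi
  have hid : i ≤ d := Nat.lt_succ_iff.mp (Finset.mem_range.mp hi)
  apply isHomogeneous_monomial
  rw [degree_two, mm_zero, mm_one]
  omega

lemma aeval_monomial_pair (m : Fin 2 →₀ ℕ) (c : K) :
    aeval (![Polynomial.X, 1] : Fin 2 → Polynomial K) (monomial m c)
      = Polynomial.C c * Polynomial.X ^ m 0 := by
  rw [aeval_monomial, Finsupp.prod_fintype _ _ fun i => pow_zero _, Fin.prod_univ_two]
  simp [Polynomial.algebraMap_eq]

lemma dehom_eq (F : MvPolynomial (Fin 2) K) :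
    aeval (![Polynomial.X, 1] : Fin 2 → Polynomial K) F
      = ∑ m ∈ F.support, Polynomial.C (coeff m F) * Polynomial.X ^ m 0 := by
  conv_lhs => rw [← support_sum_monomial_coeff F]
  rw [map_sum]
  exact Finset.sum_congr rfl fun m _ => aeval_monomial_pair m _

lemma natDegree_dehom {F : MvPolynomial (Fin 2) K} {d : ℕ} (hF : F.IsHomogeneous d) :
    (aeval (![Polynomial.X, 1] : Fin 2 → Polynomial K) F).natDegree ≤ d := by
  rw [dehom_eq]
  apply Polynomial.natDegree_sum_le_of_forall_le
  intro m hm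
  have hdm := coeff_deg hF (mem_support_iff.mp hm)
  refine le_trans (Polynomial.natDegree_mul_le) ?_
  simp
  omega

lemma homg_CX {d j : ℕ} (hj : j ≤ d) (c : K) :
    homg d (Polynomial.C c * Polynomial.X ^ j) = monomial (mm j (d - j)) c := by
  rw [homg_apply, Finset.sum_eq_single j]
  · simp [Polynomial.coeff_C_mul, Polynomial.coeff_X_pow]
  · intro i _ hne
    simp [Polynomial.coeff_C_mul, Polynomial.coeff_X_pow, hne]
  · intro hj'
    exact absurd (Finset.mem_range.mpr (Nat.lt_succ_of_le hj)) hj'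

lemma homg_dehom {F : MvPolynomial (Fin 2) K} {d : ℕ} (hF : F.IsHomogeneous d) :
    homg d (aeval (![Polynomial.X, 1] : Fin 2 → Polynomial K) F) = F := by
  rw [dehom_eq, map_sum]
  conv_rhs => rw [← support_sum_monomial_coeff F]
  refine Finset.sum_congr rfl fun m hm => ?_
  have hdm := coeff_deg hF (mem_support_iff.mp hm)
  rw [homg_CX (by omega : m 0 ≤ d)]
  congr 1
  rw [show d - m 0 = m 1 by omega, mm_self]

lemma dehom_homg {d : ℕ} {p : Polynomial K} (hp : p.natDegree ≤ d) :
    aeval (![Polynomial.X, 1] : Fin 2 → Polynomial K) (homg d p) = p := by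
  rw [homg_apply, map_sum,
    Finset.sum_congr rfl fun i (_ : i ∈ Finset.range (d+1)) => by
      rw [aeval_monomial_pair, mm_zero]]
  have h2 := Polynomial.eval₂_eq_sum_range' (R := K) (S := Polynomial K)
    Polynomial.C (Nat.lt_succ_of_le hp) Polynomial.X
  rw [Polynomial.eval₂_C_X] at h2
  exact h2.symm

lemma emb_homg (d : ℕ) (p : Polynomial K) (hp : p.natDegree ≤ d) :
    algebraMap (MvPolynomial (Fin 2) K) (FractionRing (MvPolynomial (Fin 2) K)) (homg d p)
      = Polynomial.eval₂
          ((algebraMap (MvPolynomial (Fin 2) K) (FractionRing (MvPolynomial (Fin 2) K))).comp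
            (C : K →+* MvPolynomial (Fin 2) K))
          (algebraMap (MvPolynomial (Fin 2) K) (FractionRing (MvPolynomial (Fin 2) K)) (X 0)
            / algebraMap (MvPolynomial (Fin 2) K) (FractionRing (MvPolynomial (Fin 2) K)) (X 1)) p
        * (algebraMap (MvPolynomial (Fin 2) K) (FractionRing (MvPolynomial (Fin 2) K))
            (X (1 : Fin 2))) ^ d := by
  set e := algebraMap (MvPolynomial (Fin 2) K) (FractionRing (MvPolynomial (Fin 2) K)) with he
  have hx1 : e (X 1) ≠ 0 := by
    intro h0
    have := IsFractionRing.injective (MvPolynomial (Fin 2) K)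
      (FractionRing (MvPolynomial (Fin 2) K)) (h0.trans (map_zero e).symm)
    exact X_ne_zero (1 : Fin 2) this
  rw [homg_apply, map_sum, Polynomial.eval₂_eq_sum_range' _ (Nat.lt_succ_of_le hp) _,
    Finset.sum_mul]
  refine Finset.sum_congr rfl fun i hi => ?_
  have hid : i ≤ d := Nat.lt_succ_iff.mp (Finset.mem_range.mp hi)
  rw [monomial_eq, Finsupp.prod_fintype _ _ (fun j => pow_zero _), Fin.prod_univ_two,
    mm_zero, mm_one, map_mul, map_mul, map_pow, map_pow]
  rw [RingHom.comp_apply, div_pow,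
    show e (X 1) ^ d = e (X 1) ^ i * e (X 1) ^ (d - i) by rw [← pow_add]; congr 1; omega]
  field_simp

lemma homg_mul {d1 d2 : ℕ} {p q : Polynomial K} (hp : p.natDegree ≤ d1) (hq : q.natDegree ≤ d2) :
    homg (d1 + d2) (p * q) = homg d1 p * homg d2 q := by
  apply IsFractionRing.injective (MvPolynomial (Fin 2) K) (FractionRing (MvPolynomial (Fin 2) K))
  rw [map_mul (algebraMap (MvPolynomial (Fin 2) K) (FractionRing (MvPolynomial (Fin 2) K))),
    emb_homg _ _ hp, emb_homg _ _ hq,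
    emb_homg _ _ (le_trans Polynomial.natDegree_mul_le (add_le_add hp hq)),
    Polynomial.eval₂_mul, pow_add]
  ring

lemma homg_one_one : homg (K := K) 1 1 = X 1 := by
  rw [show (1 : Polynomial K) = Polynomial.C 1 * Polynomial.X ^ 0 by simp,
    homg_CX (by norm_num)]
  rw [show mm 0 1 = Finsupp.single (1 : Fin 2) 1 by
    ext i; match i with
    | 0 => simp [Finsupp.single_apply, show (1 : Fin 2) ≠ 0 by decide]
    | 1 => simp [Finsupp.single_apply]]
  rfl

lemma homg_succ {d : ℕ} {p : Polynomial K} (hp : p.natDegree ≤ d) :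
    homg (d + 1) p = homg d p * X 1 := by
  have := homg_mul (d2 := 1) (p := p) (q := (1 : Polynomial K)) hp (by simp)
  simpa [homg_one_one] using this

lemma not_isUnit_of_eval_zero {F : MvPolynomial (Fin 2) K} (v : Fin 2 → K)
    (hv : eval v F = 0) : ¬ IsUnit F := by
  intro hu
  have := hu.map (eval v)
  rw [hv] at this
  exact not_isUnit_zero this

lemma eval_zero_of_hom {F : MvPolynomial (Fin 2) K} {d : ℕ} (hF : F.IsHomogeneous d)
    (hd : d ≠ 0) : eval (0 : Fin 2 → K) F = 0 := by
  have : (eval (0 : Fin 2 → K)) F = constantCoeff F := by rw [eval_zero]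
  rw [this, constantCoeff_eq]
  apply hF.coeff_eq_zero
  rw [map_zero]
  exact fun h => hd h.symm

end Stmt12Aux

open Stmt12Aux

theorem stmt12 (K : Type*) [Field K] (n : ℕ) (hn : 2 ≤ n)
    (f : MvPolynomial (Fin 2) K)
    (hdeg : f.totalDegree = n)
    (hf : f = homogeneousComponent (n - 1) f + homogeneousComponent n f)
    (hfn : homogeneousComponent n f ≠ 0)
    (g h : Polynomial K)
    (hg : g = MvPolynomial.aeval
      (![Polynomial.X, 1] : Fin 2 → Polynomial K) (homogeneousComponent (n - 1) f))
    (hh : h = MvPolynomial.aeval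
      (![Polynomial.X, 1] : Fin 2 → Polynomial K) (homogeneousComponent n f))
    (hh0 : h ≠ 0)
    (G H : RatFunc K)
    (hG : G = algebraMap (Polynomial K) (RatFunc K) g)
    (hH : H = algebraMap (Polynomial K) (RatFunc K) h) :
    MvPolynomial.aeval
      (![-(RatFunc.X * G) / H, -G / H] : Fin 2 → RatFunc K) f = 0 ∧
    (IsAlgClosed K → Irreducible f →
      homogeneousComponent (n - 1) f ≠ 0 ∧ ¬∃ c : K, G / H = RatFunc.C c) := by
  obtain ⟨m, rfl⟩ : ∃ m, n = m + 2 := ⟨n - 2, by omega⟩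
  have hsub : m + 2 - 1 = m + 1 := rfl
  rw [hsub] at hf hg ⊢
  have hF1 : (homogeneousComponent (m + 1) f).IsHomogeneous (m + 1) :=
    homogeneousComponent_isHomogeneous (m + 1) f
  have hF2 : (homogeneousComponent (m + 2) f).IsHomogeneous (m + 2) :=
    homogeneousComponent_isHomogeneous (m + 2) f
  have hHne : H ≠ 0 := by rw [hH]; exact RatFunc.algebraMap_ne_zero hh0
  have key : ∀ F : MvPolynomial (Fin 2) K,
      MvPolynomial.aeval (![RatFunc.X, 1] : Fin 2 → RatFunc K) F
        = algebraMap (Polynomial K) (RatFunc K)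
            (MvPolynomial.aeval (![Polynomial.X, 1] : Fin 2 → Polynomial K) F) := by
    intro F
    have hfun : (![RatFunc.X, 1] : Fin 2 → RatFunc K)
        = ⇑(algebraMap (Polynomial K) (RatFunc K)) ∘ ![Polynomial.X, 1] := by
      funext i
      fin_cases i
      · simp [RatFunc.algebraMap_X]
      · simp
    rw [aeval_def, aeval_def, IsScalarTower.algebraMap_eq K (Polynomial K) (RatFunc K), hfun,
      ← MvPolynomial.eval₂_comp_left]
  constructor
  · have hvec : (![-(RatFunc.X * G) / H, -G / H] : Fin 2 → RatFunc K)
        = fun i => (-G / H) * (![RatFunc.X, 1] : Fin 2 → RatFunc K) i := by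
      funext i
      fin_cases i
      · show -(RatFunc.X * G) / H = -G / H * RatFunc.X
        ring
      · show -G / H = -G / H * 1
        ring
    rw [hvec]
    conv_lhs => rw [hf]
    rw [map_add, aeval_scale hF1, aeval_scale hF2, key, key, ← hg, ← hh, ← hG, ← hH]
    rw [show (-G / H) ^ (m + 2) = (-G / H) ^ (m + 1) * (-G / H) from pow_succ _ _,
      mul_assoc, div_mul_cancel₀ _ hHne]
    ring
  · intro halg hirr
    have hA : homogeneousComponent (m + 1) f ≠ 0 := by
      intro hF10
      have hfF2 : f = homogeneousComponent (m + 2) f := by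
        nth_rewrite 1 [hf]
        rw [hF10, zero_add]
      have hdegh : h.natDegree ≤ m + 2 := hh ▸ natDegree_dehom hF2
      have hfh : f = homg (m + 2) h := by
        rw [hh, homg_dehom hF2]; exact hfF2
      rcases Nat.eq_zero_or_pos h.natDegree with h0 | hpos
      · set a := h.coeff 0 with hadef
        have ha : h = Polynomial.C a := Polynomial.eq_C_of_natDegree_eq_zero h0
        have hfeq : f = (MvPolynomial.C a * X 1) * (X 1 : MvPolynomial (Fin 2) K) ^ (m + 1) := by
          rw [hfh, ha, show (Polynomial.C a : Polynomial K)
              = Polynomial.C a * Polynomial.X ^ 0 by simp,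
            homg_CX (Nat.zero_le _), monomial_eq,
            Finsupp.prod_fintype _ _ (fun j => pow_zero _), Fin.prod_univ_two, mm_zero, mm_one,
            Nat.sub_zero]
          ring
        rcases hirr.isUnit_or_isUnit hfeq with hu | hu
        · exact not_isUnit_of_eval_zero 0 (by simp) hu
        · refine not_isUnit_of_eval_zero 0 ?_ hu
          rw [map_pow]
          simp [zero_pow (by omega : m + 1 ≠ 0)]
      · have hdne : h.degree ≠ 0 := (Polynomial.natDegree_pos_iff_degree_pos.mp hpos).ne'
        obtain ⟨α, hα⟩ := IsAlgClosed.exists_root h hdne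
        obtain ⟨q, hq⟩ := Polynomial.dvd_iff_isRoot.mpr hα
        have hq0 : q ≠ 0 := by rintro rfl; rw [mul_zero] at hq; exact hh0 hq
        have hqd : q.natDegree ≤ m + 1 := by
          have hmul := Polynomial.natDegree_mul (Polynomial.X_sub_C_ne_zero α) hq0
          rw [← hq, Polynomial.natDegree_X_sub_C] at hmul
          omega
        have hfeq : f = homg 1 (Polynomial.X - Polynomial.C α) * homg (m + 1) q := by
          rw [hfh, hq, show m + 2 = 1 + (m + 1) by omega,
            homg_mul (by rw [Polynomial.natDegree_X_sub_C]) hqd]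
        rcases hirr.isUnit_or_isUnit hfeq with hu | hu
        · exact not_isUnit_of_eval_zero 0 (eval_zero_of_hom (homg_isHom _ _) one_ne_zero) hu
        · exact not_isUnit_of_eval_zero 0 (eval_zero_of_hom (homg_isHom _ _) (by omega)) hu
    refine ⟨hA, ?_⟩
    rintro ⟨c, hc⟩
    have hGc : g = Polynomial.C c * h := by
      apply IsFractionRing.injective (Polynomial K) (RatFunc K)
      rw [← hG, map_mul, RatFunc.algebraMap_C, ← hH, ← hc, div_mul_cancel₀ _ hHne]
    rcases eq_or_ne c 0 with rfl | hc0
    · apply hA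
      have hg0 : g = 0 := by rw [hGc]; simp
      have hd := homg_dehom hF1
      rw [← hg, hg0, map_zero] at hd
      exact hd.symm
    · have hdegg : g.natDegree ≤ m + 1 := hg ▸ natDegree_dehom hF1
      have hdegh : h.natDegree ≤ m + 1 := by
        rw [hGc, Polynomial.natDegree_C_mul hc0] at hdegg
        exact hdegg
      have hF1h : homogeneousComponent (m + 1) f = MvPolynomial.C c * homg (m + 1) h := by
        rw [← homg_dehom hF1, ← hg, hGc,
          show Polynomial.C c * h = c • h from (Polynomial.smul_eq_C_mul c).symm,
          map_smul, MvPolynomial.smul_eq_C_mul]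
      have hF2h : homogeneousComponent (m + 2) f = homg (m + 1) h * X 1 := by
        rw [← homg_dehom hF2, ← hh]
        exact homg_succ hdegh
      have hfact : f = (MvPolynomial.C c + X 1) * homg (m + 1) h := by
        rw [hf, hF1h, hF2h]; ring
      rcases hirr.isUnit_or_isUnit hfact with hu | hu
      · refine not_isUnit_of_eval_zero (![0, -c]) ?_ hu
        simp
      · exact not_isUnit_of_eval_zero 0 (eval_zero_of_hom (homg_isHom _ _) (by omega)) hu
end
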